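/- Let k ∈ ℕ and m, m' : {0,…,k} → ℕ, and let G^T = CC_k[m,m']. For −1 ≤ i ≤ k let G^T_i be the subgraph of G^T induced by all instances of v_0,…,v_i and v'_0,…,v'_i, and for 0 ≤ x ≤ Σ_{j≤i} m(j) and 0 ≤ x' ≤ Σ_{j≤i} m'(j) let M_i(x,x') be the maximum cut size cs(S) over all cuts S of G^T_i containing exactly x instances of vertices v_j and exactly x' instances of vertices v'_j (with M_{−1}(0,0) = 0). Then for all 0 ≤ i ≤ k and all such x, x': M_i(x,x') = m'(i)·x' + m(i)·(x+x') + max over integers s, s' with max(0, x − Σ_{j<i} m(j)) ≤ s ≤ min(m(i), x) and max(0, x' − Σ_{j<i} m'(j)) ≤ s' ≤ min(m'(i), x') of [ M_{i−1}(x−s, x'−s') + s'·(Σ_{j<i} m'(j) − m(i) − 2x') + s·(Σ_{j<i}(m(j)+m'(j)) − 2(x+x')) + (s+s')² ]. -/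

import Mathlib

/-- The cut size of a cut `S` of a finite simple graph `G`: the number of edges of `G` with
exactly one endpoint in `S` (counted as ordered pairs whose first component is in `S`). -/
def cutSize {V : Type*} [Fintype V] [DecidableEq V] (G : SimpleGraph V) [DecidableRel G.Adj]
    (S : Finset V) : ℕ :=
  ((Finset.univ : Finset (V × V)).filter fun p => G.Adj p.1 p.2 ∧ p.1 ∈ S ∧ p.2 ∉ S).card

def blowRel (k : ℕ) (m m' : ℕ → ℕ) :
    ((Σ i : Fin (k+1), Fin (m i)) ⊕ (Σ i : Fin (k+1), Fin (m' i))) →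
    ((Σ i : Fin (k+1), Fin (m i)) ⊕ (Σ i : Fin (k+1), Fin (m' i))) → Prop
  | Sum.inl _, Sum.inl _ => True
  | Sum.inr _, Sum.inr _ => True
  | Sum.inl a, Sum.inr b => (b.1 : ℕ) < (a.1 : ℕ)
  | Sum.inr _, Sum.inl _ => False

instance (k : ℕ) (m m' : ℕ → ℕ) : DecidableRel (blowRel k m m') := fun u v =>
  match u, v with
  | Sum.inl _, Sum.inl _ => inferInstanceAs (Decidable True)
  | Sum.inr _, Sum.inr _ => inferInstanceAs (Decidable True)
  | Sum.inl a, Sum.inr b => inferInstanceAs (Decidable ((b.1 : ℕ) < (a.1 : ℕ)))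
  | Sum.inr _, Sum.inl _ => inferInstanceAs (Decidable False)

/-- The blow-up `CC_k[m,m']`: vertices are the instances `(v_i, a)` with `a < m(i)` and
`(v'_i, b)` with `b < m'(i)`; two distinct vertices are adjacent iff they are instances of
the same vertex of `CC_k` or of two adjacent vertices of `CC_k`. -/
def CCblow (k : ℕ) (m m' : ℕ → ℕ) :
    SimpleGraph ((Σ i : Fin (k+1), Fin (m i)) ⊕ (Σ i : Fin (k+1), Fin (m' i))) :=
  SimpleGraph.fromRel (blowRel k m m')

instance (k : ℕ) (m m' : ℕ → ℕ) : DecidableRel (CCblow k m m').Adj := fun u v =>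
  inferInstanceAs (Decidable (u ≠ v ∧ (blowRel k m m' u v ∨ blowRel k m m' v u)))

/-- Truncated multiplicity function: `trunc m i` agrees with `m` below `i` and vanishes from
`i` on; the blow-up `CC_k[trunc m (i+1), trunc m' (i+1)]` realizes the induced subgraph
`G^T_i` of `G^T = CC_k[m,m']` on the instances of `v_0,…,v_i,v'_0,…,v'_i`. -/
def trunc (m : ℕ → ℕ) (i : ℕ) : ℕ → ℕ := fun j => if j < i then m j else 0

/-- `M_i(x,x')` of the paper: the maximum cut size over all cuts `S` of `G^T_i` containing
exactly `x` instances of the `v_j` and exactly `x'` instances of the `v'_j`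
(here for the blow-up with multiplicities `m, m'`; `G^T_i` is obtained by truncation). -/
def condMaxCut (k : ℕ) (m m' : ℕ → ℕ) (x x' : ℕ) : ℕ :=
  ((Finset.univ.powerset.filter
      fun S : Finset ((Σ i : Fin (k+1), Fin (m i)) ⊕ (Σ i : Fin (k+1), Fin (m' i))) =>
        (S.filter fun u => u.isLeft = true).card = x ∧
        (S.filter fun u => u.isRight = true).card = x').sup
    fun S => cutSize (CCblow k m m') S)

open Finset

section Infra
variable {k : ℕ} {n n' : ℕ → ℕ}

/-- abbreviation for the vertex type of a blow-up -/
abbrev BV (k : ℕ) (n n' : ℕ → ℕ) :=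
  ((Σ i : Fin (k+1), Fin (n i)) ⊕ (Σ i : Fin (k+1), Fin (n' i)))

/-- index of a vertex -/
def vidx : BV k n n' → ℕ := Sum.elim (fun p => (p.1 : ℕ)) (fun p => (p.1 : ℕ))

lemma ccblow_adj_ll (a b : Σ i : Fin (k+1), Fin (n i)) :
    (CCblow k n n').Adj (Sum.inl a) (Sum.inl b) ↔ a ≠ b := by
  simp [CCblow, SimpleGraph.fromRel_adj, blowRel]

lemma ccblow_adj_rr (a b : Σ i : Fin (k+1), Fin (n' i)) :
    (CCblow k n n').Adj (Sum.inr a) (Sum.inr b) ↔ a ≠ b := by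
  simp [CCblow, SimpleGraph.fromRel_adj, blowRel]

lemma ccblow_adj_lr (a : Σ i : Fin (k+1), Fin (n i)) (b : Σ i : Fin (k+1), Fin (n' i)) :
    (CCblow k n n').Adj (Sum.inl a) (Sum.inr b) ↔ (b.1 : ℕ) < (a.1 : ℕ) := by
  simp [CCblow, SimpleGraph.fromRel_adj, blowRel]

lemma ccblow_adj_rl (a : Σ i : Fin (k+1), Fin (n' i)) (b : Σ i : Fin (k+1), Fin (n i)) :
    (CCblow k n n').Adj (Sum.inr a) (Sum.inl b) ↔ (a.1 : ℕ) < (b.1 : ℕ) := by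
  simp [CCblow, SimpleGraph.fromRel_adj, blowRel]

end Infra
section Emb
variable (k : ℕ) (m m' : ℕ → ℕ) (i : ℕ)

lemma trunc_le_succ (f : ℕ → ℕ) (j : ℕ) : trunc f i j ≤ trunc f (i+1) j := by
  unfold trunc; split_ifs <;> omega

lemma fin_trunc_lt {f : ℕ → ℕ} (p : Σ j : Fin (k+1), Fin (trunc f i j)) : (p.1 : ℕ) < i := by
  by_contra hc
  have h := p.2.isLt
  unfold trunc at h
  simp only [if_neg hc] at h
  omega

/-- the sigma-level cast map -/
def scast (f : ℕ → ℕ) (p : Σ j : Fin (k+1), Fin (trunc f i j)) :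
    Σ j : Fin (k+1), Fin (trunc f (i+1) j) :=
  ⟨p.1, Fin.castLE (trunc_le_succ i f p.1) p.2⟩

lemma scast_inj (f : ℕ → ℕ) : Function.Injective (scast k i f) := by
  rintro ⟨j, a⟩ ⟨j', b⟩ h
  rw [scast, scast, Sigma.mk.inj_iff] at h
  obtain ⟨h1, h2⟩ := h
  subst h1
  simp only [heq_eq_eq, Fin.castLE_inj] at h2
  subst h2
  rfl

/-- the embedding of the level-`i` vertices into the level-`i+1` vertices -/
def emb : BV k (trunc m i) (trunc m' i) → BV k (trunc m (i+1)) (trunc m' (i+1)) :=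
  Sum.map (scast k i m) (scast k i m')

lemma emb_inj : Function.Injective (emb k m m' i) :=
  Sum.map_injective.mpr ⟨scast_inj k i m, scast_inj k i m'⟩

lemma vidx_emb (v : BV k (trunc m i) (trunc m' i)) : vidx (emb k m m' i v) = vidx v := by
  rcases v with p | p <;> rfl

lemma isLeft_emb (v : BV k (trunc m i) (trunc m' i)) :
    (emb k m m' i v).isLeft = v.isLeft := by
  rcases v with p | p <;> rfl

lemma isRight_emb (v : BV k (trunc m i) (trunc m' i)) :
    (emb k m m' i v).isRight = v.isRight := by
  rcases v with p | p <;> rfl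

lemma vidx_lt (v : BV k (trunc m i) (trunc m' i)) : vidx v < i := by
  rcases v with p | p <;> exact fin_trunc_lt k i p

lemma vidx_le (v : BV k (trunc m (i+1)) (trunc m' (i+1))) : vidx v ≤ i := by
  rcases v with p | p <;> · have := fin_trunc_lt k (i+1) p; simp only [vidx, Sum.elim_inl, Sum.elim_inr]; omega

lemma adj_emb (u v : BV k (trunc m i) (trunc m' i)) :
    (CCblow k (trunc m (i+1)) (trunc m' (i+1))).Adj (emb k m m' i u) (emb k m m' i v) ↔
      (CCblow k (trunc m i) (trunc m' i)).Adj u v := by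
  rcases u with p | p <;> rcases v with q | q <;>
    simp only [emb, Sum.map_inl, Sum.map_inr, ccblow_adj_ll, ccblow_adj_rr, ccblow_adj_lr,
      ccblow_adj_rl, ne_eq, scast]
  · exact not_congr (scast_inj k i m).eq_iff
  · exact not_congr (scast_inj k i m').eq_iff

/-- surjectivity of `emb` onto the old vertices -/
lemma emb_surj (u : BV k (trunc m (i+1)) (trunc m' (i+1))) (hu : vidx u < i) :
    ∃ v, emb k m m' i v = u := by
  rcases u with ⟨j, a⟩ | ⟨j, a⟩
  · have hj : (j : ℕ) < i := hu
    have he : trunc m i j = trunc m (i+1) j := by unfold trunc; rw [if_pos hj, if_pos (by omega)]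
    refine ⟨Sum.inl ⟨j, Fin.cast he.symm a⟩, ?_⟩
    simp only [emb, Sum.map_inl, scast]
    congr 1
  · have hj : (j : ℕ) < i := hu
    have he : trunc m' i j = trunc m' (i+1) j := by unfold trunc; rw [if_pos hj, if_pos (by omega)]
    refine ⟨Sum.inr ⟨j, Fin.cast he.symm a⟩, ?_⟩
    simp only [emb, Sum.map_inr, scast]
    congr 1

end Emb
section Count
open Finset
variable {k : ℕ}

lemma card_sigma_fiber (n : ℕ → ℕ) (j : Fin (k+1)) :
    ((Finset.univ : Finset (Σ l : Fin (k+1), Fin (n l))).filter fun p => p.1 = j).card = n j := by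
  rw [← Fintype.card_fin (n j), ← Finset.card_univ]
  symm
  apply (Finset.card_bij (fun (b : Fin (n j)) _ => (⟨j, b⟩ : Σ l : Fin (k+1), Fin (n l))) ?_ ?_ ?_)
  · intro b _; simp
  · intro b _ b' _ h
    simpa using h
  · rintro ⟨j', b⟩ hb
    simp only [Finset.mem_filter] at hb
    obtain ⟨-, h⟩ := hb
    subst h
    exact ⟨b, Finset.mem_univ _, rfl⟩

lemma card_sigma_filter (n : ℕ → ℕ) (P : ℕ → Prop) [DecidablePred P] :
    ((Finset.univ : Finset (Σ l : Fin (k+1), Fin (n l))).filter fun p => P p.1).card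
      = ∑ j ∈ Finset.range (k+1), if P j then n j else 0 := by
  rw [Finset.card_eq_sum_card_fiberwise (f := fun p => p.1) (t := Finset.univ) (fun _ _ => Finset.mem_univ _)]
  rw [← Fin.sum_univ_eq_sum_range (fun j => if P j then n j else 0)]
  refine Finset.sum_congr rfl fun j _ => ?_
  rw [Finset.filter_filter]
  by_cases hP : P (j : ℕ)
  · rw [if_pos hP]
    rw [← card_sigma_fiber n j]
    congr 1
    ext p
    simp only [Finset.mem_filter, Finset.mem_univ, true_and, and_iff_right_iff_imp]
    rintro rfl; exact hP
  · rw [if_neg hP, Finset.card_eq_zero, Finset.filter_eq_empty_iff]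
    rintro p -
    rintro ⟨h1, rfl⟩
    exact hP h1

lemma card_filter_prod {V : Type*} [Fintype V] [DecidableEq V]
    (P Q : V → Prop) [DecidablePred P] [DecidablePred Q] :
    ((Finset.univ : Finset (V × V)).filter fun p => P p.1 ∧ Q p.2).card
      = (Finset.univ.filter P).card * (Finset.univ.filter Q).card := by
  rw [← Finset.univ_product_univ, Finset.filter_product, Finset.card_product]

lemma card_filter_mem_add_not_mem {V : Type*} [Fintype V] [DecidableEq V]
    (P : V → Prop) [DecidablePred P] (S : Finset V) :
    (Finset.univ.filter fun u => P u ∧ u ∈ S).card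
      + (Finset.univ.filter fun u => P u ∧ u ∉ S).card = (Finset.univ.filter P).card := by
  rw [← Finset.filter_filter, ← Finset.filter_filter]
  exact Finset.card_filter_add_card_filter_not (fun u => u ∈ S)

lemma card_filter_mem {V : Type*} [Fintype V] [DecidableEq V]
    (P : V → Prop) [DecidablePred P] (S : Finset V) :
    (Finset.univ.filter fun u => P u ∧ u ∈ S).card = (S.filter P).card := by
  congr 1
  ext u
  simp [and_comm]

lemma card_filter_iff {V : Type*} [Fintype V] [DecidableEq V]
    (p q : V → Prop) [DecidablePred p] [DecidablePred q] (h : ∀ u, p u ↔ q u) :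
    (Finset.univ.filter p).card = (Finset.univ.filter q).card := by
  congr 1
  ext u
  simp only [Finset.mem_filter, Finset.mem_univ, true_and, h u]

lemma card_filter_split {V : Type*} [Fintype V] [DecidableEq V]
    (P Q : V → Prop) [DecidablePred P] [DecidableDq : DecidablePred Q] :
    (Finset.univ.filter fun u => P u ∧ Q u).card
      + (Finset.univ.filter fun u => P u ∧ ¬ Q u).card = (Finset.univ.filter P).card := by
  rw [← Finset.filter_filter, ← Finset.filter_filter]
  exact Finset.card_filter_add_card_filter_not Q

end Count
section BVCount
variable {k : ℕ}

lemma card_bv_left (n n' : ℕ → ℕ) (P : ℕ → Prop) [DecidablePred P] :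
    (Finset.univ.filter fun u : BV k n n' => u.isLeft = true ∧ P (vidx u)).card
      = ∑ j ∈ Finset.range (k+1), if P j then n j else 0 := by
  rw [← card_sigma_filter n P]
  symm
  apply Finset.card_bij (fun p _ => (Sum.inl p : BV k n n')) ?_ ?_ ?_
  · intro p hp
    simp only [Finset.mem_filter, Finset.mem_univ, true_and] at hp ⊢
    exact ⟨rfl, hp⟩
  · intro p _ q _ h
    simpa using h
  · rintro (p | p) hu
    · simp only [Finset.mem_filter, Finset.mem_univ, true_and] at hu
      exact ⟨p, by simpa [vidx] using hu.2, rfl⟩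
    · simp at hu

lemma card_bv_right (n n' : ℕ → ℕ) (P : ℕ → Prop) [DecidablePred P] :
    (Finset.univ.filter fun u : BV k n n' => u.isRight = true ∧ P (vidx u)).card
      = ∑ j ∈ Finset.range (k+1), if P j then n' j else 0 := by
  rw [← card_sigma_filter n' P]
  symm
  apply Finset.card_bij (fun p _ => (Sum.inr p : BV k n n')) ?_ ?_ ?_
  · intro p hp
    simp only [Finset.mem_filter, Finset.mem_univ, true_and] at hp ⊢
    exact ⟨rfl, hp⟩
  · intro p _ q _ h
    simpa using h
  · rintro (p | p) hu
    · simp at hu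
    · simp only [Finset.mem_filter, Finset.mem_univ, true_and] at hu
      exact ⟨p, by simpa [vidx] using hu.2, rfl⟩

lemma sum_trunc (f : ℕ → ℕ) (t : ℕ) (ht : t ≤ k+1) :
    ∑ j ∈ Finset.range (k+1), trunc f t j = ∑ j ∈ Finset.range t, f j := by
  unfold trunc
  rw [← Finset.sum_filter]
  congr 1
  ext j
  simp only [Finset.mem_filter, Finset.mem_range]
  omega

lemma sum_if_lt (f : ℕ → ℕ) (t i : ℕ) (hi : i ≤ t) (ht : t ≤ k+1) :
    (∑ j ∈ Finset.range (k+1), if j < i then trunc f t j else 0) = ∑ j ∈ Finset.range i, f j := by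
  rw [← Finset.sum_filter]
  have : (Finset.range (k+1)).filter (· < i) = Finset.range i := by
    ext j; simp only [Finset.mem_filter, Finset.mem_range]; omega
  rw [this]
  refine Finset.sum_congr rfl fun j hj => ?_
  rw [Finset.mem_range] at hj
  unfold trunc
  rw [if_pos (by omega)]

lemma sum_if_not_lt (f : ℕ → ℕ) (i : ℕ) (hik : i ≤ k) :
    (∑ j ∈ Finset.range (k+1), if ¬ j < i then trunc f (i+1) j else 0) = f i := by
  rw [Finset.sum_eq_single_of_mem i (by simp; omega)]
  · rw [if_pos (by omega)]
    unfold trunc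
    rw [if_pos (by omega)]
  · intro j _ hj
    unfold trunc
    split_ifs <;> omega

end BVCount
section Cls
variable (k : ℕ) (m m' : ℕ → ℕ) (i : ℕ)

/-- class of a level-`i+1` vertex: 0 = old, 1 = new left, 2 = new right -/
def cls (u : BV k (trunc m (i+1)) (trunc m' (i+1))) : ℕ :=
  if vidx u < i then 0 else if u.isLeft then 1 else 2

variable {k m m' i}

lemma cls_mem (u : BV k (trunc m (i+1)) (trunc m' (i+1))) : cls k m m' i u ∈ ({0,1,2} : Finset ℕ) := by
  unfold cls; split_ifs <;> simp

lemma cls_eq_zero_iff (u : BV k (trunc m (i+1)) (trunc m' (i+1))) :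
    cls k m m' i u = 0 ↔ vidx u < i := by
  unfold cls; split_ifs <;> simp_all

lemma cls_eq_one_iff (u : BV k (trunc m (i+1)) (trunc m' (i+1))) :
    cls k m m' i u = 1 ↔ u.isLeft = true ∧ ¬ vidx u < i := by
  unfold cls; split_ifs <;> simp_all

lemma cls_eq_two_iff (u : BV k (trunc m (i+1)) (trunc m' (i+1))) :
    cls k m m' i u = 2 ↔ u.isRight = true ∧ ¬ vidx u < i := by
  rcases u with p | p <;> unfold cls <;> split_ifs <;> simp_all [vidx]

lemma cls_emb (v : BV k (trunc m i) (trunc m' i)) : cls k m m' i (emb k m m' i v) = 0 := by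
  rw [cls_eq_zero_iff, vidx_emb]
  exact vidx_lt k m m' i v

-- counts
lemma card_cls_one (hik : i ≤ k) :
    (Finset.univ.filter fun u => cls k m m' i u = 1).card = m i := by
  rw [card_filter_iff _ (fun u : BV k (trunc m (i+1)) (trunc m' (i+1)) =>
    u.isLeft = true ∧ ¬ vidx u < i) (fun u => cls_eq_one_iff u)]
  rw [card_bv_left (trunc m (i+1)) (trunc m' (i+1)) (fun j => ¬ j < i)]
  exact sum_if_not_lt m i hik

lemma card_cls_two (hik : i ≤ k) :
    (Finset.univ.filter fun u => cls k m m' i u = 2).card = m' i := by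
  rw [card_filter_iff _ (fun u : BV k (trunc m (i+1)) (trunc m' (i+1)) =>
    u.isRight = true ∧ ¬ vidx u < i) (fun u => cls_eq_two_iff u)]
  rw [card_bv_right (trunc m (i+1)) (trunc m' (i+1)) (fun j => ¬ j < i)]
  exact sum_if_not_lt m' i hik

lemma card_cls_zero_left (hik : i ≤ k) :
    (Finset.univ.filter fun u => cls k m m' i u = 0 ∧ u.isLeft = true).card
      = ∑ j ∈ Finset.range i, m j := by
  rw [card_filter_iff _ (fun u : BV k (trunc m (i+1)) (trunc m' (i+1)) =>
    u.isLeft = true ∧ vidx u < i) (fun u => by rw [cls_eq_zero_iff]; tauto)]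
  rw [card_bv_left (trunc m (i+1)) (trunc m' (i+1)) (fun j => j < i)]
  exact sum_if_lt m (i+1) i (by omega) (by omega)

lemma card_cls_zero_right (hik : i ≤ k) :
    (Finset.univ.filter fun u => cls k m m' i u = 0 ∧ u.isRight = true).card
      = ∑ j ∈ Finset.range i, m' j := by
  rw [card_filter_iff _ (fun u : BV k (trunc m (i+1)) (trunc m' (i+1)) =>
    u.isRight = true ∧ vidx u < i) (fun u => by rw [cls_eq_zero_iff]; tauto)]
  rw [card_bv_right (trunc m (i+1)) (trunc m' (i+1)) (fun j => j < i)]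
  exact sum_if_lt m' (i+1) i (by omega) (by omega)

lemma card_left_total (t : ℕ) (ht : t ≤ k + 1) (n n' : ℕ → ℕ) :
    (Finset.univ.filter fun u : BV k (trunc n t) (trunc n' t) => u.isLeft = true).card
      = ∑ j ∈ Finset.range t, n j := by
  rw [card_filter_iff _ (fun u : BV k (trunc n t) (trunc n' t) =>
    u.isLeft = true ∧ True) (fun u => by tauto)]
  rw [card_bv_left (trunc n t) (trunc n' t) (fun _ => True)]
  simp only [if_pos trivial]
  exact sum_trunc n t ht

lemma card_right_total (t : ℕ) (ht : t ≤ k + 1) (n n' : ℕ → ℕ) :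
    (Finset.univ.filter fun u : BV k (trunc n t) (trunc n' t) => u.isRight = true).card
      = ∑ j ∈ Finset.range t, n' j := by
  rw [card_filter_iff _ (fun u : BV k (trunc n t) (trunc n' t) =>
    u.isRight = true ∧ True) (fun u => by tauto)]
  rw [card_bv_right (trunc n t) (trunc n' t) (fun _ => True)]
  simp only [if_pos trivial]
  exact sum_trunc n' t ht

end Cls
section Adj
variable {k : ℕ} {m m' : ℕ → ℕ} {i : ℕ}

lemma adj_c1_c0 {u w : BV k (trunc m (i+1)) (trunc m' (i+1))}
    (hu : cls k m m' i u = 1) (hw : cls k m m' i w = 0) :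
    (CCblow k (trunc m (i+1)) (trunc m' (i+1))).Adj u w := by
  rw [cls_eq_one_iff] at hu
  rw [cls_eq_zero_iff] at hw
  obtain ⟨hul, hui⟩ := hu
  rcases u with p | p
  · rcases w with q | q
    · rw [ccblow_adj_ll]
      simp only [vidx, Sum.elim_inl] at hui hw
      intro h
      rw [h] at hui
      exact hui hw
    · rw [ccblow_adj_lr]
      simp only [vidx, Sum.elim_inl, Sum.elim_inr] at hui hw
      omega
  · simp at hul

lemma adj_c0_c1 {u w : BV k (trunc m (i+1)) (trunc m' (i+1))}
    (hu : cls k m m' i u = 0) (hw : cls k m m' i w = 1) :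
    (CCblow k (trunc m (i+1)) (trunc m' (i+1))).Adj u w :=
  (adj_c1_c0 hw hu).symm

lemma adj_c2_c0 {u w : BV k (trunc m (i+1)) (trunc m' (i+1))}
    (hu : cls k m m' i u = 2) (hw : cls k m m' i w = 0) :
    (CCblow k (trunc m (i+1)) (trunc m' (i+1))).Adj u w ↔ w.isRight = true := by
  rw [cls_eq_two_iff] at hu
  rw [cls_eq_zero_iff] at hw
  obtain ⟨hur, hui⟩ := hu
  rcases u with p | p
  · simp at hur
  · rcases w with q | q
    · rw [ccblow_adj_rl]
      simp only [vidx, Sum.elim_inl, Sum.elim_inr] at hui hw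
      simp only [Sum.isRight_inl]
      constructor
      · intro h; omega
      · intro h; exact absurd h (by simp)
    · rw [ccblow_adj_rr]
      simp only [vidx, Sum.elim_inr] at hui hw
      simp only [Sum.isRight_inr, iff_true]
      intro h
      rw [h] at hui
      exact hui hw

lemma adj_c0_c2 {u w : BV k (trunc m (i+1)) (trunc m' (i+1))}
    (hu : cls k m m' i u = 0) (hw : cls k m m' i w = 2) :
    (CCblow k (trunc m (i+1)) (trunc m' (i+1))).Adj u w ↔ u.isRight = true := by
  rw [SimpleGraph.adj_comm]
  exact adj_c2_c0 hw hu

lemma adj_c1_c1 {u w : BV k (trunc m (i+1)) (trunc m' (i+1))}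
    (hu : cls k m m' i u = 1) (hw : cls k m m' i w = 1) :
    (CCblow k (trunc m (i+1)) (trunc m' (i+1))).Adj u w ↔ u ≠ w := by
  rw [cls_eq_one_iff] at hu hw
  rcases u with p | p
  · rcases w with q | q
    · rw [ccblow_adj_ll]; simp
    · simp at hw
  · simp at hu

lemma adj_c2_c2 {u w : BV k (trunc m (i+1)) (trunc m' (i+1))}
    (hu : cls k m m' i u = 2) (hw : cls k m m' i w = 2) :
    (CCblow k (trunc m (i+1)) (trunc m' (i+1))).Adj u w ↔ u ≠ w := by
  rw [cls_eq_two_iff] at hu hw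
  rcases u with p | p
  · simp at hu
  · rcases w with q | q
    · simp at hw
    · rw [ccblow_adj_rr]; simp

lemma nadj_c1_c2 {u w : BV k (trunc m (i+1)) (trunc m' (i+1))}
    (hu : cls k m m' i u = 1) (hw : cls k m m' i w = 2) :
    ¬ (CCblow k (trunc m (i+1)) (trunc m' (i+1))).Adj u w := by
  have hu2 := vidx_le k m m' i u
  have hw2 := vidx_le k m m' i w
  rw [cls_eq_one_iff] at hu
  rw [cls_eq_two_iff] at hw
  rcases u with p | p
  · rcases w with q | q
    · simp at hw
    · rw [ccblow_adj_lr]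
      simp only [vidx, Sum.elim_inl, Sum.elim_inr] at hu hw hu2 hw2
      omega
  · simp at hu

lemma nadj_c2_c1 {u w : BV k (trunc m (i+1)) (trunc m' (i+1))}
    (hu : cls k m m' i u = 2) (hw : cls k m m' i w = 1) :
    ¬ (CCblow k (trunc m (i+1)) (trunc m' (i+1))).Adj u w := by
  rw [SimpleGraph.adj_comm]
  exact nadj_c1_c2 hw hu

end Adj
section Fib
variable (k : ℕ) (m m' : ℕ → ℕ) (i : ℕ)

/-- the pullback of a level-`i+1` cut to level `i` -/
def pre (S : Finset (BV k (trunc m (i+1)) (trunc m' (i+1)))) :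
    Finset (BV k (trunc m i) (trunc m' i)) :=
  Finset.univ.filter fun v => emb k m m' i v ∈ S

variable {k m m' i}

lemma mem_pre {S : Finset (BV k (trunc m (i+1)) (trunc m' (i+1)))}
    {v : BV k (trunc m i) (trunc m' i)} : v ∈ pre k m m' i S ↔ emb k m m' i v ∈ S := by
  simp [pre]

variable (S : Finset (BV k (trunc m (i+1)) (trunc m' (i+1))))

lemma fib00 :
    (Finset.univ.filter fun p : BV k (trunc m (i+1)) (trunc m' (i+1)) × BV k (trunc m (i+1)) (trunc m' (i+1)) =>
      ((CCblow k (trunc m (i+1)) (trunc m' (i+1))).Adj p.1 p.2 ∧ p.1 ∈ S ∧ p.2 ∉ S) ∧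
        (cls k m m' i p.1, cls k m m' i p.2) = (0, 0)).card
      = cutSize (CCblow k (trunc m i) (trunc m' i)) (pre k m m' i S) := by
  unfold cutSize
  symm
  apply Finset.card_bij (fun q _ => (emb k m m' i q.1, emb k m m' i q.2)) ?_ ?_ ?_
  · rintro ⟨q1, q2⟩ hq
    simp only [Finset.mem_filter, Finset.mem_univ, true_and] at hq
    obtain ⟨hadj, h1, h2⟩ := hq
    rw [mem_pre] at h1
    rw [mem_pre] at h2
    simp only [Finset.mem_filter, Finset.mem_univ, true_and, Prod.mk.injEq]
    exact ⟨⟨(adj_emb k m m' i q1 q2).mpr hadj, h1, h2⟩, cls_emb q1, cls_emb q2⟩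
  · rintro ⟨q1, q2⟩ _ ⟨q1', q2'⟩ _ h
    simp only [Prod.mk.injEq] at h
    rw [Prod.mk.injEq]
    exact ⟨emb_inj k m m' i h.1, emb_inj k m m' i h.2⟩
  · rintro ⟨p1, p2⟩ hp
    simp only [Finset.mem_filter, Finset.mem_univ, true_and, Prod.mk.injEq] at hp
    obtain ⟨⟨hadj, h1, h2⟩, hc1, hc2⟩ := hp
    obtain ⟨v1, rfl⟩ := emb_surj k m m' i p1 ((cls_eq_zero_iff p1).mp hc1)
    obtain ⟨v2, rfl⟩ := emb_surj k m m' i p2 ((cls_eq_zero_iff p2).mp hc2)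
    refine ⟨(v1, v2), ?_, rfl⟩
    simp only [Finset.mem_filter, Finset.mem_univ, true_and]
    exact ⟨(adj_emb k m m' i v1 v2).mp hadj, mem_pre.mpr h1, fun hc => h2 (mem_pre.mp hc)⟩

lemma fib10 :
    (Finset.univ.filter fun p : BV k (trunc m (i+1)) (trunc m' (i+1)) × BV k (trunc m (i+1)) (trunc m' (i+1)) =>
      ((CCblow k (trunc m (i+1)) (trunc m' (i+1))).Adj p.1 p.2 ∧ p.1 ∈ S ∧ p.2 ∉ S) ∧
        (cls k m m' i p.1, cls k m m' i p.2) = (1, 0)).card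
      = (Finset.univ.filter fun u => cls k m m' i u = 1 ∧ u ∈ S).card
        * (Finset.univ.filter fun u => cls k m m' i u = 0 ∧ u ∉ S).card := by
  rw [← card_filter_prod]
  apply card_filter_iff
  intro p
  simp only [Prod.mk.injEq]
  constructor
  · rintro ⟨⟨-, h1, h2⟩, hc1, hc2⟩; exact ⟨⟨hc1, h1⟩, hc2, h2⟩
  · rintro ⟨⟨hc1, h1⟩, hc2, h2⟩; exact ⟨⟨adj_c1_c0 hc1 hc2, h1, h2⟩, hc1, hc2⟩

lemma fib01 :
    (Finset.univ.filter fun p : BV k (trunc m (i+1)) (trunc m' (i+1)) × BV k (trunc m (i+1)) (trunc m' (i+1)) =>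
      ((CCblow k (trunc m (i+1)) (trunc m' (i+1))).Adj p.1 p.2 ∧ p.1 ∈ S ∧ p.2 ∉ S) ∧
        (cls k m m' i p.1, cls k m m' i p.2) = (0, 1)).card
      = (Finset.univ.filter fun u => cls k m m' i u = 0 ∧ u ∈ S).card
        * (Finset.univ.filter fun u => cls k m m' i u = 1 ∧ u ∉ S).card := by
  rw [← card_filter_prod]
  apply card_filter_iff
  intro p
  simp only [Prod.mk.injEq]
  constructor
  · rintro ⟨⟨-, h1, h2⟩, hc1, hc2⟩; exact ⟨⟨hc1, h1⟩, hc2, h2⟩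
  · rintro ⟨⟨hc1, h1⟩, hc2, h2⟩; exact ⟨⟨adj_c0_c1 hc1 hc2, h1, h2⟩, hc1, hc2⟩

lemma fib20 :
    (Finset.univ.filter fun p : BV k (trunc m (i+1)) (trunc m' (i+1)) × BV k (trunc m (i+1)) (trunc m' (i+1)) =>
      ((CCblow k (trunc m (i+1)) (trunc m' (i+1))).Adj p.1 p.2 ∧ p.1 ∈ S ∧ p.2 ∉ S) ∧
        (cls k m m' i p.1, cls k m m' i p.2) = (2, 0)).card
      = (Finset.univ.filter fun u => cls k m m' i u = 2 ∧ u ∈ S).card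
        * (Finset.univ.filter fun u => (cls k m m' i u = 0 ∧ u.isRight = true) ∧ u ∉ S).card := by
  rw [← card_filter_prod]
  apply card_filter_iff
  intro p
  simp only [Prod.mk.injEq]
  constructor
  · rintro ⟨⟨hadj, h1, h2⟩, hc1, hc2⟩
    exact ⟨⟨hc1, h1⟩, ⟨hc2, (adj_c2_c0 hc1 hc2).mp hadj⟩, h2⟩
  · rintro ⟨⟨hc1, h1⟩, ⟨hc2, hr⟩, h2⟩
    exact ⟨⟨(adj_c2_c0 hc1 hc2).mpr hr, h1, h2⟩, hc1, hc2⟩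

lemma fib02 :
    (Finset.univ.filter fun p : BV k (trunc m (i+1)) (trunc m' (i+1)) × BV k (trunc m (i+1)) (trunc m' (i+1)) =>
      ((CCblow k (trunc m (i+1)) (trunc m' (i+1))).Adj p.1 p.2 ∧ p.1 ∈ S ∧ p.2 ∉ S) ∧
        (cls k m m' i p.1, cls k m m' i p.2) = (0, 2)).card
      = (Finset.univ.filter fun u => (cls k m m' i u = 0 ∧ u.isRight = true) ∧ u ∈ S).card
        * (Finset.univ.filter fun u => cls k m m' i u = 2 ∧ u ∉ S).card := by
  rw [← card_filter_prod]
  apply card_filter_iff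
  intro p
  simp only [Prod.mk.injEq]
  constructor
  · rintro ⟨⟨hadj, h1, h2⟩, hc1, hc2⟩
    exact ⟨⟨⟨hc1, (adj_c0_c2 hc1 hc2).mp hadj⟩, h1⟩, hc2, h2⟩
  · rintro ⟨⟨⟨hc1, hr⟩, h1⟩, hc2, h2⟩
    exact ⟨⟨(adj_c0_c2 hc1 hc2).mpr hr, h1, h2⟩, hc1, hc2⟩

lemma fib11 :
    (Finset.univ.filter fun p : BV k (trunc m (i+1)) (trunc m' (i+1)) × BV k (trunc m (i+1)) (trunc m' (i+1)) =>
      ((CCblow k (trunc m (i+1)) (trunc m' (i+1))).Adj p.1 p.2 ∧ p.1 ∈ S ∧ p.2 ∉ S) ∧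
        (cls k m m' i p.1, cls k m m' i p.2) = (1, 1)).card
      = (Finset.univ.filter fun u => cls k m m' i u = 1 ∧ u ∈ S).card
        * (Finset.univ.filter fun u => cls k m m' i u = 1 ∧ u ∉ S).card := by
  rw [← card_filter_prod]
  apply card_filter_iff
  intro p
  simp only [Prod.mk.injEq]
  constructor
  · rintro ⟨⟨-, h1, h2⟩, hc1, hc2⟩; exact ⟨⟨hc1, h1⟩, hc2, h2⟩
  · rintro ⟨⟨hc1, h1⟩, hc2, h2⟩
    exact ⟨⟨(adj_c1_c1 hc1 hc2).mpr (fun he => h2 (he ▸ h1)), h1, h2⟩, hc1, hc2⟩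

lemma fib22 :
    (Finset.univ.filter fun p : BV k (trunc m (i+1)) (trunc m' (i+1)) × BV k (trunc m (i+1)) (trunc m' (i+1)) =>
      ((CCblow k (trunc m (i+1)) (trunc m' (i+1))).Adj p.1 p.2 ∧ p.1 ∈ S ∧ p.2 ∉ S) ∧
        (cls k m m' i p.1, cls k m m' i p.2) = (2, 2)).card
      = (Finset.univ.filter fun u => cls k m m' i u = 2 ∧ u ∈ S).card
        * (Finset.univ.filter fun u => cls k m m' i u = 2 ∧ u ∉ S).card := by
  rw [← card_filter_prod]
  apply card_filter_iff
  intro p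
  simp only [Prod.mk.injEq]
  constructor
  · rintro ⟨⟨-, h1, h2⟩, hc1, hc2⟩; exact ⟨⟨hc1, h1⟩, hc2, h2⟩
  · rintro ⟨⟨hc1, h1⟩, hc2, h2⟩
    exact ⟨⟨(adj_c2_c2 hc1 hc2).mpr (fun he => h2 (he ▸ h1)), h1, h2⟩, hc1, hc2⟩

lemma fib12 :
    (Finset.univ.filter fun p : BV k (trunc m (i+1)) (trunc m' (i+1)) × BV k (trunc m (i+1)) (trunc m' (i+1)) =>
      ((CCblow k (trunc m (i+1)) (trunc m' (i+1))).Adj p.1 p.2 ∧ p.1 ∈ S ∧ p.2 ∉ S) ∧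
        (cls k m m' i p.1, cls k m m' i p.2) = (1, 2)).card = 0 := by
  rw [Finset.card_eq_zero, Finset.filter_eq_empty_iff]
  rintro p -
  rintro ⟨⟨hadj, -, -⟩, hc⟩
  rw [Prod.mk.injEq] at hc
  exact nadj_c1_c2 hc.1 hc.2 hadj

lemma fib21 :
    (Finset.univ.filter fun p : BV k (trunc m (i+1)) (trunc m' (i+1)) × BV k (trunc m (i+1)) (trunc m' (i+1)) =>
      ((CCblow k (trunc m (i+1)) (trunc m' (i+1))).Adj p.1 p.2 ∧ p.1 ∈ S ∧ p.2 ∉ S) ∧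
        (cls k m m' i p.1, cls k m m' i p.2) = (2, 1)).card = 0 := by
  rw [Finset.card_eq_zero, Finset.filter_eq_empty_iff]
  rintro p -
  rintro ⟨⟨hadj, -, -⟩, hc⟩
  rw [Prod.mk.injEq] at hc
  exact nadj_c2_c1 hc.1 hc.2 hadj

end Fib
section Decomp
variable (k : ℕ) (m m' : ℕ → ℕ) (i : ℕ)

def NSL (S : Finset (BV k (trunc m (i+1)) (trunc m' (i+1)))) : ℕ :=
  (S.filter fun u => cls k m m' i u = 1).card
def NSR (S : Finset (BV k (trunc m (i+1)) (trunc m' (i+1)))) : ℕ :=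
  (S.filter fun u => cls k m m' i u = 2).card
def NXL (S : Finset (BV k (trunc m (i+1)) (trunc m' (i+1)))) : ℕ :=
  (S.filter fun u => cls k m m' i u = 0 ∧ u.isLeft = true).card
def NXR (S : Finset (BV k (trunc m (i+1)) (trunc m' (i+1)))) : ℕ :=
  (S.filter fun u => cls k m m' i u = 0 ∧ u.isRight = true).card

variable {k m m' i}

lemma not_isLeft_iff {α β : Type*} (u : α ⊕ β) :
    ¬ u.isLeft = true ↔ u.isRight = true := by
  rcases u with p | p <;> simp

lemma not_isRight_iff {α β : Type*} (u : α ⊕ β) :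
    ¬ u.isRight = true ↔ u.isLeft = true := by
  rcases u with p | p <;> simp

lemma cutSize_decomp_nat (S : Finset (BV k (trunc m (i+1)) (trunc m' (i+1)))) :
    cutSize (CCblow k (trunc m (i+1)) (trunc m' (i+1))) S
      = cutSize (CCblow k (trunc m i) (trunc m' i)) (pre k m m' i S)
        + (Finset.univ.filter fun u => cls k m m' i u = 0 ∧ u ∈ S).card
          * (Finset.univ.filter fun u => cls k m m' i u = 1 ∧ u ∉ S).card
        + (Finset.univ.filter fun u => (cls k m m' i u = 0 ∧ u.isRight = true) ∧ u ∈ S).card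
          * (Finset.univ.filter fun u => cls k m m' i u = 2 ∧ u ∉ S).card
        + (Finset.univ.filter fun u => cls k m m' i u = 1 ∧ u ∈ S).card
          * (Finset.univ.filter fun u => cls k m m' i u = 0 ∧ u ∉ S).card
        + (Finset.univ.filter fun u => cls k m m' i u = 1 ∧ u ∈ S).card
          * (Finset.univ.filter fun u => cls k m m' i u = 1 ∧ u ∉ S).card
        + (Finset.univ.filter fun u => cls k m m' i u = 2 ∧ u ∈ S).card
          * (Finset.univ.filter fun u => (cls k m m' i u = 0 ∧ u.isRight = true) ∧ u ∉ S).card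
        + (Finset.univ.filter fun u => cls k m m' i u = 2 ∧ u ∈ S).card
          * (Finset.univ.filter fun u => cls k m m' i u = 2 ∧ u ∉ S).card := by
  unfold cutSize
  rw [Finset.card_eq_sum_card_fiberwise
      (f := fun p => (cls k m m' i p.1, cls k m m' i p.2))
      (t := ({0,1,2} : Finset ℕ) ×ˢ ({0,1,2} : Finset ℕ))
      (fun p _ => Finset.mem_product.mpr ⟨cls_mem p.1, cls_mem p.2⟩)]
  rw [Finset.sum_product]
  have e1 : ∀ f : ℕ → ℕ, ∑ x ∈ ({0,1,2} : Finset ℕ), f x = f 0 + f 1 + f 2 := fun f => by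
    rw [Finset.sum_insert (by decide), Finset.sum_insert (by decide), Finset.sum_singleton]
    ring
  rw [e1]
  simp only [e1, Finset.filter_filter]
  rw [fib00, fib01, fib02, fib10, fib11, fib12, fib20, fib21, fib22]
  unfold cutSize
  ring
end Decomp
section DecompZ
variable {k : ℕ} {m m' : ℕ → ℕ} {i : ℕ}

lemma cutSize_decomp (hik : i ≤ k) (S : Finset (BV k (trunc m (i+1)) (trunc m' (i+1)))) :
    (cutSize (CCblow k (trunc m (i+1)) (trunc m' (i+1))) S : ℤ)
      = (cutSize (CCblow k (trunc m i) (trunc m' i)) (pre k m m' i S) : ℤ)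
        + (m' i : ℤ) * ((NXR k m m' i S : ℤ) + (NSR k m m' i S : ℤ))
        + (m i : ℤ) * (((NXL k m m' i S : ℤ) + (NSL k m m' i S : ℤ))
            + ((NXR k m m' i S : ℤ) + (NSR k m m' i S : ℤ)))
        + (NSR k m m' i S : ℤ) * (((∑ j ∈ Finset.range i, m' j : ℕ) : ℤ) - (m i : ℤ)
            - 2 * ((NXR k m m' i S : ℤ) + (NSR k m m' i S : ℤ)))
        + (NSL k m m' i S : ℤ) * (((∑ j ∈ Finset.range i, m j : ℕ) : ℤ)
            + ((∑ j ∈ Finset.range i, m' j : ℕ) : ℤ)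
            - 2 * (((NXL k m m' i S : ℤ) + (NSL k m m' i S : ℤ))
                + ((NXR k m m' i S : ℤ) + (NSR k m m' i S : ℤ))))
        + ((NSL k m m' i S : ℤ) + (NSR k m m' i S : ℤ))^2 := by
  have hnat := cutSize_decomp_nat S
  have f1 : (Finset.univ.filter fun u => cls k m m' i u = 1 ∧ u ∈ S).card = NSL k m m' i S :=
    card_filter_mem _ S
  have f2 : (Finset.univ.filter fun u => cls k m m' i u = 1 ∧ u ∈ S).card
      + (Finset.univ.filter fun u => cls k m m' i u = 1 ∧ u ∉ S).card = m i := by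
    rw [card_filter_mem_add_not_mem]; exact card_cls_one hik
  have f3 : (Finset.univ.filter fun u => cls k m m' i u = 2 ∧ u ∈ S).card = NSR k m m' i S :=
    card_filter_mem _ S
  have f4 : (Finset.univ.filter fun u => cls k m m' i u = 2 ∧ u ∈ S).card
      + (Finset.univ.filter fun u => cls k m m' i u = 2 ∧ u ∉ S).card = m' i := by
    rw [card_filter_mem_add_not_mem]; exact card_cls_two hik
  have f5 : (Finset.univ.filter fun u => (cls k m m' i u = 0 ∧ u.isRight = true) ∧ u ∈ S).card
      = NXR k m m' i S := card_filter_mem _ S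
  have f6 : (Finset.univ.filter fun u => (cls k m m' i u = 0 ∧ u.isRight = true) ∧ u ∈ S).card
      + (Finset.univ.filter fun u => (cls k m m' i u = 0 ∧ u.isRight = true) ∧ u ∉ S).card
      = ∑ j ∈ Finset.range i, m' j := by
    rw [card_filter_mem_add_not_mem]; exact card_cls_zero_right hik
  have f7 : (Finset.univ.filter fun u => cls k m m' i u = 0 ∧ u ∈ S).card
      = NXL k m m' i S + NXR k m m' i S := by
    rw [← card_filter_split (fun u => cls k m m' i u = 0 ∧ u ∈ S) (fun u => u.isLeft = true)]
    congr 1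
    · rw [card_filter_iff _ (fun u : BV k (trunc m (i+1)) (trunc m' (i+1)) =>
        (cls k m m' i u = 0 ∧ u.isLeft = true) ∧ u ∈ S) (fun u => by tauto)]
      exact card_filter_mem _ S
    · rw [card_filter_iff _ (fun u : BV k (trunc m (i+1)) (trunc m' (i+1)) =>
        (cls k m m' i u = 0 ∧ u.isRight = true) ∧ u ∈ S) (fun u => by
          have := not_isLeft_iff u; tauto)]
      exact card_filter_mem _ S
  have f8 : (Finset.univ.filter fun u => cls k m m' i u = 0 ∧ u ∈ S).card
      + (Finset.univ.filter fun u => cls k m m' i u = 0 ∧ u ∉ S).card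
      = (∑ j ∈ Finset.range i, m j) + (∑ j ∈ Finset.range i, m' j) := by
    rw [card_filter_mem_add_not_mem]
    rw [← card_filter_split (fun u => cls k m m' i u = 0) (fun u => u.isLeft = true)]
    congr 1
    · exact card_cls_zero_left hik
    · rw [← card_cls_zero_right hik]
      apply card_filter_iff
      intro u
      rw [and_congr_right_iff]
      intro _
      exact not_isLeft_iff u
  rw [f1, f3, f5, f7] at hnat
  have hZ := congrArg (fun n : ℕ => (n : ℤ)) hnat
  push_cast at hZ
  have hz1 : ((Finset.univ.filter fun u => cls k m m' i u = 1 ∧ u ∉ S).card : ℤ)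
      = (m i : ℤ) - NSL k m m' i S := by omega
  have hz2 : ((Finset.univ.filter fun u => cls k m m' i u = 2 ∧ u ∉ S).card : ℤ)
      = (m' i : ℤ) - NSR k m m' i S := by omega
  have hz3 : ((Finset.univ.filter fun u => (cls k m m' i u = 0 ∧ u.isRight = true) ∧ u ∉ S).card : ℤ)
      = ((∑ j ∈ Finset.range i, m' j : ℕ) : ℤ) - NXR k m m' i S := by omega
  have hz4 : ((Finset.univ.filter fun u => cls k m m' i u = 0 ∧ u ∉ S).card : ℤ)
      = ((∑ j ∈ Finset.range i, m j : ℕ) : ℤ) + ((∑ j ∈ Finset.range i, m' j : ℕ) : ℤ)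
        - NXL k m m' i S - NXR k m m' i S := by omega
  rw [hz1, hz2, hz3, hz4] at hZ
  linear_combination hZ

end DecompZ
section Cuts
variable {k : ℕ} {m m' : ℕ → ℕ} {i : ℕ}

lemma count_left_split (S : Finset (BV k (trunc m (i+1)) (trunc m' (i+1)))) :
    (S.filter fun u => u.isLeft = true).card = NXL k m m' i S + NSL k m m' i S := by
  unfold NXL NSL
  rw [← Finset.card_filter_add_card_filter_not (s := S.filter fun u => u.isLeft = true)
    (p := fun u => vidx u < i)]
  rw [Finset.filter_filter, Finset.filter_filter]
  congr 1
  · congr 1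
    ext u
    simp only [Finset.mem_filter, cls_eq_zero_iff]
    try tauto
  · congr 1
    ext u
    simp only [Finset.mem_filter, cls_eq_one_iff]
    try tauto

lemma count_right_split (S : Finset (BV k (trunc m (i+1)) (trunc m' (i+1)))) :
    (S.filter fun u => u.isRight = true).card = NXR k m m' i S + NSR k m m' i S := by
  unfold NXR NSR
  rw [← Finset.card_filter_add_card_filter_not (s := S.filter fun u => u.isRight = true)
    (p := fun u => vidx u < i)]
  rw [Finset.filter_filter, Finset.filter_filter]
  congr 1
  · congr 1
    ext u
    simp only [Finset.mem_filter, cls_eq_zero_iff]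
    try tauto
  · congr 1
    ext u
    simp only [Finset.mem_filter, cls_eq_two_iff]
    try tauto
end Cuts
section Construct
variable {k : ℕ} {m m' : ℕ → ℕ} {i : ℕ}

lemma card_pre_filter (P : BV k (trunc m (i+1)) (trunc m' (i+1)) → Prop) [DecidablePred P]
    (P0 : BV k (trunc m i) (trunc m' i) → Prop) [DecidablePred P0]
    (hP : ∀ v, P (emb k m m' i v) ↔ P0 v) :
    (Finset.univ.filter fun u => cls k m m' i u = 0 ∧ P u).card
      = (Finset.univ.filter P0).card := by
  symm
  apply Finset.card_bij (fun v _ => emb k m m' i v) ?_ ?_ ?_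
  · intro v hv
    simp only [Finset.mem_filter, Finset.mem_univ, true_and] at hv ⊢
    exact ⟨cls_emb v, (hP v).mpr hv⟩
  · intro v _ w _ h
    exact emb_inj k m m' i h
  · intro u hu
    simp only [Finset.mem_filter, Finset.mem_univ, true_and] at hu
    obtain ⟨hc, hPu⟩ := hu
    obtain ⟨v, rfl⟩ := emb_surj k m m' i u ((cls_eq_zero_iff u).mp hc)
    exact ⟨v, by simp only [Finset.mem_filter, Finset.mem_univ, true_and]; exact (hP v).mp hPu, rfl⟩

lemma pre_count_left (S : Finset (BV k (trunc m (i+1)) (trunc m' (i+1)))) :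
    ((pre k m m' i S).filter fun u => u.isLeft = true).card = NXL k m m' i S := by
  have h1 : (pre k m m' i S).filter (fun u => u.isLeft = true)
      = Finset.univ.filter (fun v => emb k m m' i v ∈ S ∧ v.isLeft = true) := by
    unfold pre
    rw [Finset.filter_filter]
  rw [h1, ← card_pre_filter (fun u => u ∈ S ∧ u.isLeft = true)
    (fun v => emb k m m' i v ∈ S ∧ v.isLeft = true) (fun v => by simp [isLeft_emb])]
  unfold NXL
  rw [← card_filter_mem (fun u => cls k m m' i u = 0 ∧ u.isLeft = true) S]
  apply card_filter_iff
  intro u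
  tauto

lemma pre_count_right (S : Finset (BV k (trunc m (i+1)) (trunc m' (i+1)))) :
    ((pre k m m' i S).filter fun u => u.isRight = true).card = NXR k m m' i S := by
  have h1 : (pre k m m' i S).filter (fun u => u.isRight = true)
      = Finset.univ.filter (fun v => emb k m m' i v ∈ S ∧ v.isRight = true) := by
    unfold pre
    rw [Finset.filter_filter]
  rw [h1, ← card_pre_filter (fun u => u ∈ S ∧ u.isRight = true)
    (fun v => emb k m m' i v ∈ S ∧ v.isRight = true) (fun v => by simp [isRight_emb])]
  unfold NXR
  rw [← card_filter_mem (fun u => cls k m m' i u = 0 ∧ u.isRight = true) S]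
  apply card_filter_iff
  intro u
  tauto

lemma exists_cut_ext (hik : i ≤ k) (S₀ : Finset (BV k (trunc m i) (trunc m' i))) {s s' : ℕ}
    (hs : s ≤ m i) (hs' : s' ≤ m' i) :
    ∃ S : Finset (BV k (trunc m (i+1)) (trunc m' (i+1))),
      pre k m m' i S = S₀ ∧ NSL k m m' i S = s ∧ NSR k m m' i S = s' ∧
      NXL k m m' i S = (S₀.filter fun u => u.isLeft = true).card ∧
      NXR k m m' i S = (S₀.filter fun u => u.isRight = true).card := by
  obtain ⟨Tl, hTl, hTlc⟩ := Finset.exists_subset_card_eq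
    (s := Finset.univ.filter fun u => cls k m m' i u = 1) (n := s) (by rw [card_cls_one hik]; exact hs)
  obtain ⟨Tr, hTr, hTrc⟩ := Finset.exists_subset_card_eq
    (s := Finset.univ.filter fun u => cls k m m' i u = 2) (n := s') (by rw [card_cls_two hik]; exact hs')
  have hclsTl : ∀ u ∈ Tl, cls k m m' i u = 1 := fun u hu => (Finset.mem_filter.mp (hTl hu)).2
  have hclsTr : ∀ u ∈ Tr, cls k m m' i u = 2 := fun u hu => (Finset.mem_filter.mp (hTr hu)).2
  refine ⟨(S₀.image (emb k m m' i) ∪ Tl) ∪ Tr, ?_, ?_, ?_, ?_, ?_⟩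
  · ext v
    rw [mem_pre]
    simp only [Finset.mem_union, Finset.mem_image]
    constructor
    · rintro ((⟨w, hw, hwe⟩ | h) | h)
      · rwa [← emb_inj k m m' i hwe]
      · exact absurd (hclsTl _ h) (by rw [cls_emb]; omega)
      · exact absurd (hclsTr _ h) (by rw [cls_emb]; omega)
    · intro hv
      exact Or.inl (Or.inl ⟨v, hv, rfl⟩)
  · rw [← hTlc]
    unfold NSL
    congr 1
    ext u
    simp only [Finset.mem_filter, Finset.mem_union, Finset.mem_image]
    constructor
    · rintro ⟨(⟨w, _, rfl⟩ | h) | h, hc⟩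
      · rw [cls_emb] at hc; omega
      · exact h
      · rw [hclsTr _ h] at hc; omega
    · intro h
      exact ⟨Or.inl (Or.inr h), hclsTl _ h⟩
  · rw [← hTrc]
    unfold NSR
    congr 1
    ext u
    simp only [Finset.mem_filter, Finset.mem_union, Finset.mem_image]
    constructor
    · rintro ⟨(⟨w, _, rfl⟩ | h) | h, hc⟩
      · rw [cls_emb] at hc; omega
      · rw [hclsTl _ h] at hc; omega
      · exact h
    · intro h
      exact ⟨Or.inr h, hclsTr _ h⟩
  · unfold NXL
    rw [← Finset.card_image_of_injective (S₀.filter fun u => u.isLeft = true) (emb_inj k m m' i)]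
    congr 1
    ext u
    simp only [Finset.mem_filter, Finset.mem_union, Finset.mem_image]
    constructor
    · rintro ⟨(⟨w, hw, rfl⟩ | h) | h, hc, hl⟩
      · exact ⟨w, ⟨hw, by rwa [isLeft_emb] at hl⟩, rfl⟩
      · rw [hclsTl _ h] at hc; omega
      · rw [hclsTr _ h] at hc; omega
    · rintro ⟨w, ⟨hw, hl⟩, rfl⟩
      exact ⟨Or.inl (Or.inl ⟨w, hw, rfl⟩), cls_emb w, by rwa [isLeft_emb]⟩
  · unfold NXR
    rw [← Finset.card_image_of_injective (S₀.filter fun u => u.isRight = true) (emb_inj k m m' i)]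
    congr 1
    ext u
    simp only [Finset.mem_filter, Finset.mem_union, Finset.mem_image]
    constructor
    · rintro ⟨(⟨w, hw, rfl⟩ | h) | h, hc, hl⟩
      · exact ⟨w, ⟨hw, by rwa [isRight_emb] at hl⟩, rfl⟩
      · rw [hclsTl _ h] at hc; omega
      · rw [hclsTr _ h] at hc; omega
    · rintro ⟨w, ⟨hw, hl⟩, rfl⟩
      exact ⟨Or.inl (Or.inl ⟨w, hw, rfl⟩), cls_emb w, by rwa [isRight_emb]⟩

lemma exists_cut {k : ℕ} (t : ℕ) (ht : t ≤ k+1) (n n' : ℕ → ℕ) {x x' : ℕ}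
    (hx : x ≤ ∑ j ∈ Finset.range t, n j) (hx' : x' ≤ ∑ j ∈ Finset.range t, n' j) :
    ∃ S : Finset (BV k (trunc n t) (trunc n' t)),
      (S.filter fun u => u.isLeft = true).card = x ∧
      (S.filter fun u => u.isRight = true).card = x' := by
  obtain ⟨Tl, hTl, hTlc⟩ := Finset.exists_subset_card_eq
    (s := Finset.univ.filter fun u : BV k (trunc n t) (trunc n' t) => u.isLeft = true) (n := x)
    (by rw [card_left_total t ht]; exact hx)
  obtain ⟨Tr, hTr, hTrc⟩ := Finset.exists_subset_card_eq
    (s := Finset.univ.filter fun u : BV k (trunc n t) (trunc n' t) => u.isRight = true) (n := x')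
    (by rw [card_right_total t ht]; exact hx')
  have hl : ∀ u ∈ Tl, Sum.isLeft u = true := fun u hu => (Finset.mem_filter.mp (hTl hu)).2
  have hr : ∀ u ∈ Tr, Sum.isRight u = true := fun u hu => (Finset.mem_filter.mp (hTr hu)).2
  refine ⟨Tl ∪ Tr, ?_, ?_⟩
  · rw [Finset.filter_union, Finset.filter_true_of_mem hl,
      Finset.filter_false_of_mem (fun u hu => (not_isLeft_iff u).mpr (hr u hu)),
      Finset.union_empty]
    exact hTlc
  · rw [Finset.filter_union,
      Finset.filter_false_of_mem (fun u hu => (not_isRight_iff u).mpr (hl u hu)),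
      Finset.filter_true_of_mem hr, Finset.empty_union]
    exact hTrc
end Construct
section Sup
variable {k : ℕ} {n n' : ℕ → ℕ} {x x' : ℕ}

lemma le_condMaxCut (S : Finset (BV k n n'))
    (h1 : (S.filter fun u => u.isLeft = true).card = x)
    (h2 : (S.filter fun u => u.isRight = true).card = x') :
    cutSize (CCblow k n n') S ≤ condMaxCut k n n' x x' := by
  apply Finset.le_sup
  simp only [Finset.mem_filter, Finset.mem_powerset]
  exact ⟨Finset.subset_univ S, h1, h2⟩

lemma condMaxCut_attained (S₀ : Finset (BV k n n'))
    (h1 : (S₀.filter fun u => u.isLeft = true).card = x)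
    (h2 : (S₀.filter fun u => u.isRight = true).card = x') :
    ∃ S : Finset (BV k n n'),
      (S.filter fun u => u.isLeft = true).card = x ∧
      (S.filter fun u => u.isRight = true).card = x' ∧
      condMaxCut k n n' x x' = cutSize (CCblow k n n') S := by
  obtain ⟨S, hS, he⟩ := Finset.exists_mem_eq_sup
    (Finset.univ.powerset.filter fun S : Finset (BV k n n') =>
      (S.filter fun u => u.isLeft = true).card = x ∧
      (S.filter fun u => u.isRight = true).card = x')
    ⟨S₀, by
      simp only [Finset.mem_filter, Finset.mem_powerset]
      exact ⟨Finset.subset_univ S₀, h1, h2⟩⟩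
    (fun S => cutSize (CCblow k n n') S)
  simp only [Finset.mem_filter, Finset.mem_powerset] at hS
  exact ⟨S, hS.2.1, hS.2.2, he⟩

end Sup
/-- The recurrence of Theorem 3 (the dynamic program): for `0 ≤ i ≤ k`,
`0 ≤ x ≤ Σ_{j≤i} m(j)` and `0 ≤ x' ≤ Σ_{j≤i} m'(j)`,
`M_i(x,x') = m'(i)x' + m(i)(x+x') + max_{s,s'} [ M_{i-1}(x-s, x'-s')
  + s'(Σ_{j<i} m'(j) − m(i) − 2x') + s(Σ_{j<i}(m(j)+m'(j)) − 2(x+x')) + (s+s')² ]`,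
the max being over integers `max(0, x−Σ_{j<i} m(j)) ≤ s ≤ min(m(i),x)` and
`max(0, x'−Σ_{j<i} m'(j)) ≤ s' ≤ min(m'(i),x')`. -/
theorem condMaxCut_recurrence (k : ℕ) (m m' : ℕ → ℕ) (i : ℕ) (hik : i ≤ k) (x x' : ℕ)
    (hx : x ≤ ∑ j ∈ Finset.range (i+1), m j)
    (hx' : x' ≤ ∑ j ∈ Finset.range (i+1), m' j) :
    IsGreatest
      {v : ℤ | ∃ s s' : ℕ,
        x - (∑ j ∈ Finset.range i, m j) ≤ s ∧ s ≤ min (m i) x ∧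
        x' - (∑ j ∈ Finset.range i, m' j) ≤ s' ∧ s' ≤ min (m' i) x' ∧
        v = (condMaxCut k (trunc m i) (trunc m' i) (x - s) (x' - s') : ℤ)
            + (s' : ℤ) * (((∑ j ∈ Finset.range i, m' j : ℕ) : ℤ) - (m i : ℤ) - 2 * (x' : ℤ))
            + (s : ℤ) * (((∑ j ∈ Finset.range i, (m j + m' j) : ℕ) : ℤ)
                - 2 * ((x : ℤ) + (x' : ℤ)))
            + ((s : ℤ) + (s' : ℤ))^2}
      ((condMaxCut k (trunc m (i+1)) (trunc m' (i+1)) x x' : ℤ)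
        - (m' i : ℤ) * (x' : ℤ) - (m i : ℤ) * ((x : ℤ) + (x' : ℤ))) := by

  have hik1 : i + 1 ≤ k + 1 := by omega
  have hsum : ((∑ j ∈ Finset.range i, (m j + m' j) : ℕ) : ℤ)
      = ((∑ j ∈ Finset.range i, m j : ℕ) : ℤ) + ((∑ j ∈ Finset.range i, m' j : ℕ) : ℤ) := by
    rw [Finset.sum_add_distrib]
    push_cast
    ring
  constructor
  · -- membership
    obtain ⟨S0, hS0l, hS0r⟩ := exists_cut (i+1) hik1 m m' hx hx'
    obtain ⟨S, hSl, hSr, hSe⟩ := condMaxCut_attained S0 hS0l hS0r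
    have hxs : NXL k m m' i S + NSL k m m' i S = x := by rw [← count_left_split S]; exact hSl
    have hxs' : NXR k m m' i S + NSR k m m' i S = x' := by rw [← count_right_split S]; exact hSr
    have hb1 : NSL k m m' i S ≤ m i := by
      rw [← card_cls_one (m := m) (m' := m') hik]
      exact Finset.card_le_card (Finset.filter_subset_filter _ (Finset.subset_univ S))
    have hb2 : NSR k m m' i S ≤ m' i := by
      rw [← card_cls_two (m := m) (m' := m') hik]
      exact Finset.card_le_card (Finset.filter_subset_filter _ (Finset.subset_univ S))
    have hb3 : NXL k m m' i S ≤ ∑ j ∈ Finset.range i, m j := by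
      rw [← card_cls_zero_left (m := m) (m' := m') hik]
      exact Finset.card_le_card (Finset.filter_subset_filter _ (Finset.subset_univ S))
    have hb4 : NXR k m m' i S ≤ ∑ j ∈ Finset.range i, m' j := by
      rw [← card_cls_zero_right (m := m) (m' := m') hik]
      exact Finset.card_le_card (Finset.filter_subset_filter _ (Finset.subset_univ S))
    refine ⟨NSL k m m' i S, NSR k m m' i S, by omega, by omega, by omega, by omega, ?_⟩
    have hple : cutSize (CCblow k (trunc m i) (trunc m' i)) (pre k m m' i S)
        ≤ condMaxCut k (trunc m i) (trunc m' i) (NXL k m m' i S) (NXR k m m' i S) :=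
      le_condMaxCut _ (pre_count_left S) (pre_count_right S)
    obtain ⟨S0', h0l, h0r⟩ := exists_cut (k := k) i (by omega) m m'
      (x := NXL k m m' i S) (x' := NXR k m m' i S) hb3 hb4
    obtain ⟨S₀, h₀l, h₀r, h₀e⟩ := condMaxCut_attained S0' h0l h0r
    obtain ⟨S', hpre', hnsl', hnsr', hnxl', hnxr'⟩ := exists_cut_ext hik S₀ hb1 hb2
    have hS'l : (S'.filter fun u => u.isLeft = true).card = x := by
      rw [count_left_split S', hnxl', h₀l, hnsl', hxs]
    have hS'r : (S'.filter fun u => u.isRight = true).card = x' := by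
      rw [count_right_split S', hnxr', h₀r, hnsr', hxs']
    have hle' := le_condMaxCut S' hS'l hS'r
    have hd1 := cutSize_decomp hik S
    have hd2 := cutSize_decomp hik S'
    rw [hpre', hnsl', hnsr', hnxl', hnxr', h₀l, h₀r] at hd2
    have key : (cutSize (CCblow k (trunc m i) (trunc m' i)) (pre k m m' i S) : ℤ)
        = (condMaxCut k (trunc m i) (trunc m' i) (NXL k m m' i S) (NXR k m m' i S) : ℤ) := by
      have hle'z : (cutSize (CCblow k (trunc m (i+1)) (trunc m' (i+1))) S' : ℤ)
          ≤ (condMaxCut k (trunc m (i+1)) (trunc m' (i+1)) x x' : ℤ) := by exact_mod_cast hle'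
      have hplez : (cutSize (CCblow k (trunc m i) (trunc m' i)) (pre k m m' i S) : ℤ)
          ≤ (condMaxCut k (trunc m i) (trunc m' i) (NXL k m m' i S) (NXR k m m' i S) : ℤ) := by
        exact_mod_cast hple
      have h₀ez : (condMaxCut k (trunc m i) (trunc m' i) (NXL k m m' i S) (NXR k m m' i S) : ℤ)
          = (cutSize (CCblow k (trunc m i) (trunc m' i)) S₀ : ℤ) := by exact_mod_cast h₀e
      have hSez : (condMaxCut k (trunc m (i+1)) (trunc m' (i+1)) x x' : ℤ)
          = (cutSize (CCblow k (trunc m (i+1)) (trunc m' (i+1))) S : ℤ) := by exact_mod_cast hSe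
      linarith [hd1, hd2, hle'z, hplez]
    have hxsub : x - NSL k m m' i S = NXL k m m' i S := by omega
    have hxsub' : x' - NSR k m m' i S = NXR k m m' i S := by omega
    rw [hxsub, hxsub', ← key, hSe, hd1, hsum]
    have hz1 : (NXL k m m' i S : ℤ) + (NSL k m m' i S : ℤ) = (x : ℤ) := by omega
    have hz2 : (NXR k m m' i S : ℤ) + (NSR k m m' i S : ℤ) = (x' : ℤ) := by omega
    rw [hz1, hz2]
    ring
  · -- upper bound
    rintro v ⟨s, s', hs1, hs2, hs3, hs4, rfl⟩
    have hsmi : s ≤ m i := le_trans hs2 (min_le_left _ _)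
    have hsx : s ≤ x := le_trans hs2 (min_le_right _ _)
    have hsmi' : s' ≤ m' i := le_trans hs4 (min_le_left _ _)
    have hsx' : s' ≤ x' := le_trans hs4 (min_le_right _ _)
    obtain ⟨S0', h0l, h0r⟩ := exists_cut (k := k) i (by omega) m m'
      (x := x - s) (x' := x' - s') (by omega) (by omega)
    obtain ⟨S₀, h₀l, h₀r, h₀e⟩ := condMaxCut_attained S0' h0l h0r
    obtain ⟨S', hpre', hnsl', hnsr', hnxl', hnxr'⟩ := exists_cut_ext hik S₀ hsmi hsmi'
    have hS'l : (S'.filter fun u => u.isLeft = true).card = x := by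
      rw [count_left_split S', hnxl', h₀l, hnsl']
      omega
    have hS'r : (S'.filter fun u => u.isRight = true).card = x' := by
      rw [count_right_split S', hnxr', h₀r, hnsr']
      omega
    have hle' := le_condMaxCut S' hS'l hS'r
    have hd2 := cutSize_decomp hik S'
    rw [hpre', hnsl', hnsr', hnxl', hnxr', h₀l, h₀r] at hd2
    have hc1 : ((x - s : ℕ) : ℤ) + (s : ℤ) = (x : ℤ) := by omega
    have hc2 : ((x' - s' : ℕ) : ℤ) + (s' : ℤ) = (x' : ℤ) := by omega
    rw [hc1, hc2] at hd2
    rw [h₀e, hsum]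
    have hle'z : (cutSize (CCblow k (trunc m (i+1)) (trunc m' (i+1))) S' : ℤ)
        ≤ (condMaxCut k (trunc m (i+1)) (trunc m' (i+1)) x x' : ℤ) := by exact_mod_cast hle'
    have step : (cutSize (CCblow k (trunc m i) (trunc m' i)) S₀ : ℤ)
        + (s' : ℤ) * (((∑ j ∈ Finset.range i, m' j : ℕ) : ℤ) - (m i : ℤ) - 2 * (x' : ℤ))
        + (s : ℤ) * (((∑ j ∈ Finset.range i, m j : ℕ) : ℤ)
            + ((∑ j ∈ Finset.range i, m' j : ℕ) : ℤ) - 2 * ((x : ℤ) + (x' : ℤ)))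
        + ((s : ℤ) + (s' : ℤ))^2
        + (m' i : ℤ) * (x' : ℤ) + (m i : ℤ) * ((x : ℤ) + (x' : ℤ))
        = (cutSize (CCblow k (trunc m (i+1)) (trunc m' (i+1))) S' : ℤ) := by
      linear_combination (-1 : ℤ) * hd2
    linarith [step, hle'z]
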